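/- Let m, n ≥ 2 be integers. The Seidel energy of the complete 3-uniform bipartite hypergraph C^3_{m,n} satisfies E_S(C^3_{m,n}) = (m-1)(2n-1) + (n-1)(2m-1) + √(U(m,n)), where U(m,n) = 16 m^3 n + n^2 + 2mn(8n^2 - 40n + 49) + m^2(32n^2 - 80n + 1). -/

import Mathlib

open Polynomial Matrix

/-- The Seidel matrix of the complete 3-uniform bipartite hypergraph `C³_{m,n}`. -/
noncomputable def seidelS (m n : ℕ) : Matrix (Fin m ⊕ Fin n) (Fin m ⊕ Fin n) ℝ :=
  fun i j =>
    if i = j then 0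
    else
      match i, j with
      | Sum.inl _, Sum.inl _ => 1 - 2 * (n : ℝ)
      | Sum.inr _, Sum.inr _ => 1 - 2 * (m : ℝ)
      | _, _ => 1 - 2 * ((m : ℝ) + (n : ℝ) - 2)

/-- Type-I hyperedge-deleted Seidel matrix. -/
noncomputable def seidelI (m n : ℕ) : Matrix (Fin m ⊕ Fin n) (Fin m ⊕ Fin n) ℝ :=
  fun i j =>
    match i, j with
    | Sum.inl a, Sum.inr b =>
        if a.val = 0 ∧ b.val ≤ 1 then 1 - 2 * ((m : ℝ) + (n : ℝ) - 3)
        else seidelS m n (Sum.inl a) (Sum.inr b)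
    | Sum.inr b, Sum.inl a =>
        if a.val = 0 ∧ b.val ≤ 1 then 1 - 2 * ((m : ℝ) + (n : ℝ) - 3)
        else seidelS m n (Sum.inr b) (Sum.inl a)
    | Sum.inr a, Sum.inr b =>
        if (a.val = 0 ∧ b.val = 1) ∨ (a.val = 1 ∧ b.val = 0) then 1 - 2 * ((m : ℝ) - 1)
        else seidelS m n (Sum.inr a) (Sum.inr b)
    | Sum.inl a, Sum.inl b => seidelS m n (Sum.inl a) (Sum.inl b)

/-- Type-II hyperedge-deleted Seidel matrix. -/
noncomputable def seidelII (m n : ℕ) : Matrix (Fin m ⊕ Fin n) (Fin m ⊕ Fin n) ℝ :=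
  fun i j =>
    match i, j with
    | Sum.inl a, Sum.inl b =>
        if (a.val = 0 ∧ b.val = 1) ∨ (a.val = 1 ∧ b.val = 0) then 1 - 2 * ((n : ℝ) - 1)
        else seidelS m n (Sum.inl a) (Sum.inl b)
    | Sum.inl a, Sum.inr b =>
        if a.val ≤ 1 ∧ b.val = 0 then 1 - 2 * ((m : ℝ) + (n : ℝ) - 3)
        else seidelS m n (Sum.inl a) (Sum.inr b)
    | Sum.inr b, Sum.inl a =>
        if a.val ≤ 1 ∧ b.val = 0 then 1 - 2 * ((m : ℝ) + (n : ℝ) - 3)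
        else seidelS m n (Sum.inr b) (Sum.inl a)
    | Sum.inr a, Sum.inr b => seidelS m n (Sum.inr a) (Sum.inr b)

/-- Seidel energy: sum of absolute values of the eigenvalues (roots of the
characteristic polynomial, with multiplicity). -/
noncomputable def seidelEnergy {k : Type*} [Fintype k] [DecidableEq k]
    (M : Matrix k k ℝ) : ℝ :=
  (M.charpoly.roots.map (fun x => |x|)).sum

/-- The discriminant `U(m,n)` appearing in the closed form of the Seidel energy. -/
noncomputable def Ufun (m n : ℕ) : ℝ :=
  16 * (m:ℝ)^3 * n + (n:ℝ)^2 + 2 * (m:ℝ) * n * (8*(n:ℝ)^2 - 40*n + 49)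
    + (m:ℝ)^2 * (32*(n:ℝ)^2 - 80*n + 1)

lemma det_formula (m n : ℕ) (hm : 1 ≤ m) (hn : 1 ≤ n) (x : ℝ)
    (h1 : x + (1 - 2*(n:ℝ)) ≠ 0) (h2 : x + (1 - 2*(m:ℝ)) ≠ 0) :
    Matrix.det (x • (1 : Matrix (Fin m ⊕ Fin n) (Fin m ⊕ Fin n) ℝ) - seidelS m n)
      = (x + (1 - 2*(n:ℝ)))^(m-1) * (x + (1 - 2*(m:ℝ)))^(n-1) *
        (x^2 - (((m:ℝ)-1)*(1-2*(n:ℝ)) + ((n:ℝ)-1)*(1-2*(m:ℝ)))*x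
          + (((m:ℝ)-1)*((n:ℝ)-1)*(1-2*(n:ℝ))*(1-2*(m:ℝ))
             - (m:ℝ)*(n:ℝ)*(1-2*((m:ℝ)+(n:ℝ)-2))^2)) := by
  set a : ℝ := 1 - 2*(n:ℝ) with ha
  set b : ℝ := 1 - 2*(m:ℝ) with hb
  set c : ℝ := 1 - 2*((m:ℝ)+(n:ℝ)-2) with hc
  set d : Fin m ⊕ Fin n → ℝ := Sum.elim (fun _ => x + a) (fun _ => x + b) with hd
  set U : Matrix (Fin m ⊕ Fin n) (Fin 2) ℝ :=
    Matrix.of (Sum.elim (fun _ => ![(1:ℝ), 0]) (fun _ => ![(0:ℝ), 1])) with hU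
  set B : Matrix (Fin 2) (Fin 2) ℝ := !![a, c; c, b] with hB
  set E : Matrix (Fin m ⊕ Fin n) (Fin 2) ℝ := Matrix.of (fun i t => (d i)⁻¹ * (U * B) i t) with hE
  have hdne : ∀ i, d i ≠ 0 := by rintro (p|q) <;> simpa [hd] using (by assumption)
  have key : x • (1 : Matrix (Fin m ⊕ Fin n) (Fin m ⊕ Fin n) ℝ) - seidelS m n
      = Matrix.diagonal d - U * B * Uᵀ := by
    ext i j
    rcases i with p | p <;> rcases j with q | q
    · by_cases hpq : p = q <;>
        simp [seidelS, Matrix.mul_apply, Fin.sum_univ_two, Matrix.one_apply,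
          Matrix.diagonal_apply, hpq, hU, hB, hd, ha] <;> ring
    · simp [seidelS, Matrix.mul_apply, Fin.sum_univ_two, Matrix.one_apply,
        Matrix.diagonal_apply, hU, hB, hd, hc]
    · simp [seidelS, Matrix.mul_apply, Fin.sum_univ_two, Matrix.one_apply,
        Matrix.diagonal_apply, hU, hB, hd, hc]
    · by_cases hpq : p = q <;>
        simp [seidelS, Matrix.mul_apply, Fin.sum_univ_two, Matrix.one_apply,
          Matrix.diagonal_apply, hpq, hU, hB, hd, hb] <;> ring
  have hDE : Matrix.diagonal d * E = U * B := by
    ext i t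
    rw [Matrix.diagonal_mul]
    simp [hE, mul_inv_cancel_left₀ (hdne i)]
  have hfac : Matrix.diagonal d - U * B * Uᵀ = Matrix.diagonal d * (1 - E * Uᵀ) := by
    rw [Matrix.mul_sub, Matrix.mul_one, ← Matrix.mul_assoc, hDE]
  have hUE : Uᵀ * E = !![(m:ℝ)*((x+a)⁻¹*a), (m:ℝ)*((x+a)⁻¹*c);
                         (n:ℝ)*((x+b)⁻¹*c), (n:ℝ)*((x+b)⁻¹*b)] := by
    ext s t
    fin_cases s <;> fin_cases t <;>
      simp [hE, hU, hB, hd, Matrix.mul_apply, Fintype.sum_sum_type, Fin.sum_univ_two,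
        Matrix.transpose_apply, mul_comm]
  rw [key, hfac, Matrix.det_mul, Matrix.det_diagonal, Matrix.det_one_sub_mul_comm, hUE]
  have hprod : (∏ i, d i) = (x+a)^m * (x+b)^n := by
    rw [Fintype.prod_sum_type]
    simp [hd]
  rw [hprod, Matrix.det_fin_two]
  simp only [Matrix.sub_apply, Matrix.one_apply, Matrix.cons_val', Matrix.cons_val_zero,
    Matrix.cons_val_one, Matrix.head_cons, Matrix.head_fin_const, Matrix.empty_val',
    Matrix.cons_val_fin_one]
  simp [Matrix.one_apply]
  have hm' : (x+a)^m = (x+a)^(m-1) * (x+a) := by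
    conv_lhs => rw [← Nat.sub_add_cancel hm]
    rw [pow_succ]
  have hn' : (x+b)^n = (x+b)^(n-1) * (x+b) := by
    conv_lhs => rw [← Nat.sub_add_cancel hn]
    rw [pow_succ]
  rw [hm', hn']
  have h1' : x + a ≠ 0 := h1
  have h2' : x + b ≠ 0 := h2
  field_simp
  ring

lemma eval_charpoly' {k : Type*} [Fintype k] [DecidableEq k] (M : Matrix k k ℝ) (x : ℝ) :
    M.charpoly.eval x = (x • (1 : Matrix k k ℝ) - M).det := by
  rw [Matrix.charpoly, ← Polynomial.coe_evalRingHom, RingHom.map_det]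
  congr 1
  ext i j
  by_cases h : i = j <;>
    simp [Matrix.charmatrix_apply, h, Matrix.one_apply, Matrix.diagonal_apply]

theorem stmt3 (m n : ℕ) (hm : 2 ≤ m) (hn : 2 ≤ n) :
    seidelEnergy (seidelS m n) =
      ((m:ℝ) - 1) * (2*(n:ℝ) - 1) + ((n:ℝ) - 1) * (2*(m:ℝ) - 1) +
        Real.sqrt (Ufun m n) := by
  have hm1 : 1 ≤ m := le_trans one_le_two hm
  have hn1 : 1 ≤ n := le_trans one_le_two hn
  have hmr : (2:ℝ) ≤ (m:ℝ) := by exact_mod_cast hm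
  have hnr : (2:ℝ) ≤ (n:ℝ) := by exact_mod_cast hn
  set T : ℝ := ((m:ℝ)-1)*(1-2*(n:ℝ)) + ((n:ℝ)-1)*(1-2*(m:ℝ)) with hT
  set Dq : ℝ := ((m:ℝ)-1)*((n:ℝ)-1)*(1-2*(n:ℝ))*(1-2*(m:ℝ))
      - (m:ℝ)*(n:ℝ)*(1-2*((m:ℝ)+(n:ℝ)-2))^2 with hDq
  have hUeq : Ufun m n = T^2 - 4*Dq := by rw [Ufun, hT, hDq]; ring
  have hDqneg : Dq < 0 := by
    rw [hDq]
    nlinarith [sq_nonneg ((m:ℝ)-(n:ℝ)), sq_nonneg ((m:ℝ)+(n:ℝ)-4),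
      mul_pos (by linarith : (0:ℝ) < (m:ℝ)) (by linarith : (0:ℝ) < (n:ℝ)),
      sq_nonneg ((m:ℝ)+(n:ℝ)-3),
      mul_nonneg (by linarith : (0:ℝ) ≤ (m:ℝ)-2) (by linarith : (0:ℝ) ≤ (n:ℝ)-2)]
  have hUpos : 0 < Ufun m n := by rw [hUeq]; nlinarith [sq_nonneg T]
  set s : ℝ := Real.sqrt (Ufun m n) with hs
  have hs2 : s^2 = T^2 - 4*Dq := by rw [hs, Real.sq_sqrt hUpos.le, hUeq]
  have hsT : |T| < s := by
    have h1 : T^2 < s^2 := by rw [hs2]; linarith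
    calc |T| = Real.sqrt (T^2) := (Real.sqrt_sq_eq_abs T).symm
    _ < Real.sqrt (s^2) := Real.sqrt_lt_sqrt (sq_nonneg T) h1
    _ = s := by rw [Real.sqrt_sq_eq_abs, abs_of_nonneg (Real.sqrt_nonneg _)]
  have habsT := abs_lt.mp hsT
  set lp : ℝ := (T + s)/2 with hlp
  set lm : ℝ := (T - s)/2 with hlm
  have hlp0 : 0 ≤ lp := by rw [hlp]; linarith [habsT.1]
  have hlm0 : lm ≤ 0 := by rw [hlm]; linarith [habsT.2]
  have hprodq : ∀ x : ℝ, (x - lp) * (x - lm) = x^2 - T*x + Dq := by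
    intro x
    have : lp * lm = Dq := by
      rw [hlp, hlm, div_mul_div_comm,
        show (T+s)*(T-s) = T^2 - s^2 by ring, hs2]
      ring
    rw [show (x - lp) * (x - lm) = x^2 - (lp + lm)*x + lp*lm by ring, this, hlp, hlm]
    ring
  set ms : Multiset ℝ := Multiset.replicate (m-1) (2*(n:ℝ)-1)
      + Multiset.replicate (n-1) (2*(m:ℝ)-1) + {lp, lm} with hms
  have hcp : (seidelS m n).charpoly = (ms.map fun r => X - C r).prod := by
    apply Polynomial.eq_of_infinite_eval_eq
    apply Set.Infinite.mono (s := ({2*(n:ℝ)-1, 2*(m:ℝ)-1} : Set ℝ)ᶜ)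
    swap
    · exact Set.Finite.infinite_compl ((Set.finite_singleton _).insert _)
    intro x hx
    simp only [Set.mem_compl_iff, Set.mem_insert_iff, Set.mem_singleton_iff, not_or] at hx
    obtain ⟨hx1, hx2⟩ := hx
    have h1 : x + (1 - 2*(n:ℝ)) ≠ 0 := fun h => hx1 (by linarith)
    have h2 : x + (1 - 2*(m:ℝ)) ≠ 0 := fun h => hx2 (by linarith)
    show _ = _
    rw [eval_charpoly', det_formula m n hm1 hn1 x h1 h2,
      Polynomial.eval_multiset_prod, Multiset.map_map]
    simp only [Function.comp, Polynomial.eval_sub, Polynomial.eval_X, Polynomial.eval_C]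
    rw [hms]
    simp only [Multiset.map_add, Multiset.prod_add, Multiset.map_replicate,
      Multiset.prod_replicate, Multiset.insert_eq_cons, Multiset.map_cons,
      Multiset.prod_cons, Multiset.map_singleton, Multiset.prod_singleton]
    rw [hprodq x, ← hT, ← hDq]
    rw [show x + (1 - 2*(n:ℝ)) = x - (2*(n:ℝ)-1) by ring,
        show x + (1 - 2*(m:ℝ)) = x - (2*(m:ℝ)-1) by ring]
  rw [seidelEnergy, hcp, Polynomial.roots_multiset_prod_X_sub_C, hms]
  simp only [Multiset.map_add, Multiset.sum_add, Multiset.map_replicate,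
    Multiset.sum_replicate, Multiset.insert_eq_cons, Multiset.map_cons,
    Multiset.sum_cons, Multiset.map_singleton, Multiset.sum_singleton, smul_eq_mul]
  rw [abs_of_nonneg (by linarith : (0:ℝ) ≤ 2*(n:ℝ)-1),
      abs_of_nonneg (by linarith : (0:ℝ) ≤ 2*(m:ℝ)-1),
      abs_of_nonneg hlp0, abs_of_nonpos hlm0, nsmul_eq_mul, nsmul_eq_mul,
      Nat.cast_sub hm1, Nat.cast_sub hn1, Nat.cast_one, hlp, hlm]
  ring
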